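/- Let q be a prime power with char(F_q) ∉ {2,3}, let e = ±1 with q ≡ e (mod 3), and let D ∈ F_{q³} \ F_q satisfy N(D) = 1 and N(D+1) = −1, where N is the norm from F_{q³} to F_q. Let a be a primitive third root of unity in the algebraic closure, C(D) = (D − a⁻¹)/(D − a), and G = {x : x^{3(q−e)} = 1}. Then C(D) is a square in the group G if and only if D² + D + 1 is a square in F_{q³}. -/
import Mathlib

lemma stmt19_key {F : Type*} [Field F] (a d0 d1 d2 : F)
    (h3 : (3 : F) ≠ 0) (ha3 : a ^ 3 = 1) (ha2 : a ^ 2 + a + 1 = 0)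
    (n1 : d0 * (d1 * d2) = 1) (n2 : (d0 + 1) * ((d1 + 1) * (d2 + 1)) = -1) :
    (d0 - a ^ 2) ^ 3 * ((d0 - a) * ((d1 - a) * (d2 - a))) =
      (d0 - a) ^ 3 * ((d0 - a ^ 2) * ((d1 - a ^ 2) * (d2 - a ^ 2))) := by
  have key2 : (d0 - a ^ 2) ^ 2 * ((d1 - a) * (d2 - a)) =
      (d0 - a) ^ 2 * ((d1 - a ^ 2) * (d2 - a ^ 2)) := by
    apply mul_left_cancel₀ h3
    linear_combination
      (12*a^4 - 6*a^3*d0 + 6*a^3 - 9*a^2*d0 - 3*a*d0) * n1 +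
      (-6*a^5 - 3*a^4 + 6*a^3*d0 - 6*a^3 + 9*a^2*d0 - 3*a^2 + 3*a*d0) * n2 +
      (a^5 - a^4*d0 - a^4*d1 - a^4*d2 + 3*a^4 + a^3*d0*d1 + a^3*d0*d2 - 7*a^3*d0 + a^3*d1*d2 - 3*a^3*d1 - 3*a^3*d2 + 6*a^3 + 4*a^2*d0^2 - a^2*d0*d1*d2 + 7*a^2*d0*d1 + 7*a^2*d0*d2 + 3*a^2*d1*d2 + 9*a^2 - 4*a*d0^2*d1 - 4*a*d0^2*d2 - 7*a*d0*d1*d2 - 12*a*d0 + 3*a - 2*d0^2*d1 - 2*d0^2*d2 - 10*d0^2 + 2*d0*d1*d2 - 8*d0*d1 - 8*d0*d2 + 8*d0 + 2*d1*d2 + 10*d1 + 10*d2 - 4) * ha2 +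
      (-a^4 + a^3*d0 + a^3*d1 + a^3*d2 - 4*a^3 + 6*a^2*d0*d1*d2 + 5*a^2*d0*d1 + 5*a^2*d0*d2 + 20*a^2*d0 + 5*a^2*d1*d2 + 7*a^2*d1 + 7*a^2*d2 + 2*a^2 - 7*a*d0^2 - 8*a*d0*d1*d2 - 5*a*d0*d1 - 5*a*d0*d2 + 5*a*d0 + 2*a*d1*d2 + 10*a*d1 + 10*a*d2 - a - 2*d0^2*d1 - 2*d0^2*d2 - 10*d0^2 + 2*d0*d1*d2 - 8*d0*d1 - 8*d0*d2 + 8*d0 + 2*d1*d2 + 10*d1 + 10*d2 - 4) * ha3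
  linear_combination ((d0 - a) * (d0 - a ^ 2)) * key2

/-- For `D ∈ S₄(1,−1) \ F_q`, the element `C(D) = (D − a⁻¹)/(D − a)` is a square in the
group `G = {x : x^{3(q−e)} = 1}` iff `D² + D + 1` is a square in `F_{q³}`. -/
theorem stmt_19 (p k q : ℕ) (hp : Nat.Prime p) (hk : 0 < k) (hq : q = p ^ k)
    (hp2 : p ≠ 2) (hp3 : p ≠ 3)
    (e : ℤ) (he : e = 1 ∨ e = -1) (hqe : ((q : ℤ) : ZMod 3) = ((e : ℤ) : ZMod 3))
    (K L : Type) [Field K] [Fintype K] [Field L] [Fintype L] [Algebra K L]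
    (hK : Fintype.card K = q) (hL : Fintype.card L = q ^ 3)
    (Ω : Type) [Field Ω] [IsAlgClosed Ω] [Algebra L Ω]
    (a : Ω) (ha3 : a ^ 3 = 1) (ha1 : a ≠ 1)
    (D : L) (hD : D ∉ Set.range (algebraMap K L))
    (h1 : D ^ (q ^ 2 + q + 1) = 1) (h2 : (D + 1) ^ (q ^ 2 + q + 1) = -1) :
    (∃ g : Ω, g ^ (3 * ((q : ℤ) - e)) = 1 ∧
        g ^ 2 = (algebraMap L Ω D - a⁻¹) / (algebraMap L Ω D - a))
      ↔ IsSquare (D ^ 2 + D + 1) := by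
  classical
  haveI : Fact p.Prime := ⟨hp⟩
  -- characteristic of L and Ω is p
  haveI : CharP L (ringChar L) := ringChar.charP L
  have hrp : (ringChar L).Prime := CharP.char_is_prime L (ringChar L)
  obtain ⟨n, -, hn⟩ := FiniteField.card L (ringChar L)
  have hpr : p = ringChar L := by
    have hdvd : p ∣ (ringChar L) ^ (n : ℕ) := by
      rw [← hn, hL, hq]
      exact dvd_pow (dvd_pow_self p hk.ne') (by positivity)
    exact (Nat.prime_dvd_prime_iff_eq hp hrp).mp (hp.dvd_of_dvd_pow hdvd)
  haveI hcharL : CharP L p := by rw [hpr]; infer_instance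
  have hinjL : Function.Injective (algebraMap L Ω) := (algebraMap L Ω).injective
  haveI hcharΩ : CharP Ω p := charP_of_injective_algebraMap hinjL p
  have h3ne : (3 : Ω) ≠ 0 := by
    intro h
    exact hp3 ((Nat.prime_dvd_prime_iff_eq hp (by norm_num)).mp
      ((CharP.cast_eq_zero_iff Ω p 3).mp h))
  have hchar2 : ringChar L ≠ 2 := by rw [← hpr]; exact hp2
  -- facts about a
  have ha2 : a ^ 2 + a + 1 = 0 := by
    rcases mul_eq_zero.mp (show (a - 1) * (a ^ 2 + a + 1) = 0 by linear_combination ha3) with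
      h | h
    · exact absurd (sub_eq_zero.mp h) ha1
    · exact h
  have hainv : a⁻¹ = a ^ 2 := inv_eq_of_mul_eq_one_right (by linear_combination ha3)
  -- q is odd
  have hoq : Odd q := by rw [hq]; exact (hp.odd_of_ne_two hp2).pow
  obtain ⟨r0, hr0⟩ := hoq
  -- q mod 3
  have hemod : (e = 1 ∧ q % 3 = 1) ∨ (e = -1 ∧ q % 3 = 2) := by
    rcases he with he | he
    · left
      refine ⟨he, ?_⟩
      rw [he] at hqe
      have h2' : ((q : ℕ) : ZMod 3) = ((1 : ℕ) : ZMod 3) := by exact_mod_cast hqe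
      have := (ZMod.natCast_eq_natCast_iff _ _ _).mp h2'
      simpa [Nat.ModEq] using this
    · right
      refine ⟨he, ?_⟩
      rw [he] at hqe
      have h2' : ((q : ℕ) : ZMod 3) = ((2 : ℕ) : ZMod 3) := by
        rw [show ((q:ℤ) : ZMod 3) = ((q:ℕ) : ZMod 3) by push_cast; ring] at hqe
        rw [hqe]; decide
      have := (ZMod.natCast_eq_natCast_iff _ _ _).mp h2'
      simpa [Nat.ModEq] using this
  -- D^2 + D + 1 ≠ 0
  have hx : D ^ 2 + D + 1 ≠ 0 := by
    intro hx0
    have hD3 : D ^ 3 = 1 := by linear_combination (D - 1) * hx0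
    have hD1 : D ≠ 1 := by
      intro h
      have h3L : (3 : L) = 0 := by rw [h] at hx0; linear_combination hx0
      exact hp3 ((Nat.prime_dvd_prime_iff_eq hp (by norm_num)).mp
        ((CharP.cast_eq_zero_iff L p 3).mp h3L))
    rcases hemod with ⟨he1, hq3⟩ | ⟨he1, hq3⟩
    · -- e = 1 : cube roots of unity already lie in K
      haveI : Fact (Nat.Prime 3) := ⟨by norm_num⟩
      have hdvd : 3 ∣ Fintype.card Kˣ := by
        rw [Fintype.card_units, hK]; omega
      obtain ⟨w, hw⟩ := exists_prime_orderOf_dvd_card 3 hdvd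
      set z : L := algebraMap K L (w : K) with hz
      have hz3 : z ^ 3 = 1 := by
        have hw3 : (w : K) ^ 3 = 1 := by
          have := pow_orderOf_eq_one w
          rw [hw] at this
          simpa using congrArg Units.val this
        rw [hz, ← map_pow, hw3, map_one]
      have hz1 : z ≠ 1 := by
        intro h
        have hw1 : (w : K) = 1 := by
          apply (algebraMap K L).injective
          rw [← hz, h, map_one]
        have : w = 1 := Units.ext hw1
        rw [this, orderOf_one] at hw
        norm_num at hw
      have hzx : z ^ 2 + z + 1 = 0 := by
        rcases mul_eq_zero.mp
          (show (z - 1) * (z ^ 2 + z + 1) = 0 by linear_combination hz3) with h | h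
        · exact absurd (sub_eq_zero.mp h) hz1
        · exact h
      rcases mul_eq_zero.mp
        (show (D - z) * (D + z + 1) = 0 by linear_combination hx0 - hzx) with h | h
      · exact hD ⟨(w : K), by rw [← hz]; linear_combination -h⟩
      · exact hD ⟨((w : K)) ^ 2, by rw [map_pow, ← hz]; linear_combination hzx - h⟩
    · -- e = -1 : L has no cube roots of unity except 1
      have hD0 : D ≠ 0 := by
        intro h
        rw [h] at hD3
        norm_num at hD3
      have hcard : D ^ (Fintype.card L - 1) = 1 :=
        FiniteField.pow_card_sub_one_eq_one D hD0
      have ho3 : orderOf D ∣ 3 := orderOf_dvd_of_pow_eq_one hD3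
      have hoc : orderOf D ∣ Fintype.card L - 1 := orderOf_dvd_of_pow_eq_one hcard
      have hmod : q ^ 3 % 3 = 2 := by
        rw [Nat.pow_mod, hq3]
      have h3n : ¬ (3 ∣ Fintype.card L - 1) := by
        rw [hL]
        omega
      rcases (Nat.dvd_prime (by norm_num)).mp ho3 with h | h
      · exact hD1 (orderOf_eq_one_iff.mp h)
      · exact h3n (h ▸ hoc)
  -- setup in Ω
  set d0 : Ω := algebraMap L Ω D with hd0
  have hDq3 : D ^ (q ^ 3) = D := by rw [← hL]; exact FiniteField.pow_card D
  have hd1q : (d0 ^ q) ^ q = d0 ^ (q ^ 2) := by rw [← pow_mul]; congr 1; ring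
  have hd2q : (d0 ^ (q ^ 2)) ^ q = d0 := by
    rw [← pow_mul, show q ^ 2 * q = q ^ 3 by ring, hd0, ← map_pow, hDq3]
  -- Frobenius helpers in Ω
  have frob_add : ∀ u v : Ω, (u + v) ^ q = u ^ q + v ^ q := by
    intro u v; rw [hq]; exact add_pow_char_pow u v p k
  have frob_sub : ∀ u v : Ω, (u - v) ^ q = u ^ q - v ^ q := by
    intro u v; rw [hq]; exact sub_pow_char_pow u v k
  -- norm relations in Ω
  have hL1 : D * (D ^ q * D ^ (q ^ 2)) = 1 := by rw [← h1]; ring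
  have n1 : d0 * (d0 ^ q * d0 ^ (q ^ 2)) = 1 := by
    have := congrArg (algebraMap L Ω) hL1
    simpa [map_mul, map_pow, map_one, hd0] using this
  have frob_addL : ∀ u : L, (u + 1) ^ q = u ^ q + 1 := by
    intro u
    rw [hq, add_pow_char_pow u 1 p k, one_pow]
  have hfq2 : (D + 1) ^ (q ^ 2) = D ^ (q ^ 2) + 1 := by
    rw [show q ^ 2 = q * q by ring, pow_mul, frob_addL, frob_addL, ← pow_mul]
  have hL2 : (D + 1) * ((D ^ q + 1) * (D ^ (q ^ 2) + 1)) = -1 := by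
    rw [← frob_addL D, ← hfq2, ← h2]; ring
  have n2 : (d0 + 1) * ((d0 ^ q + 1) * (d0 ^ (q ^ 2) + 1)) = -1 := by
    have := congrArg (algebraMap L Ω) hL2
    simpa [map_mul, map_pow, map_add, map_one, map_neg, hd0] using this
  -- xb and its Frobenius powers
  have hxbmap : algebraMap L Ω (D ^ 2 + D + 1) = d0 ^ 2 + d0 + 1 := by
    rw [map_add, map_add, map_pow, map_one]
  set xb : Ω := d0 ^ 2 + d0 + 1 with hxbdef
  have hxb0 : xb ≠ 0 := by
    rw [← hxbmap]
    intro h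
    exact hx (hinjL (h.trans (map_zero _).symm))
  have frob_x : ∀ u : Ω, (u ^ 2 + u + 1) ^ q = (u ^ q) ^ 2 + u ^ q + 1 := by
    intro u
    rw [frob_add, frob_add, one_pow, pow_right_comm]
  have hxq : xb ^ q = (d0 ^ q) ^ 2 + d0 ^ q + 1 := by
    rw [hxbdef]; exact frob_x d0
  have hxq2 : xb ^ (q ^ 2) = (d0 ^ (q ^ 2)) ^ 2 + d0 ^ (q ^ 2) + 1 := by
    rw [show q ^ 2 = q * q by ring, pow_mul, hxq, frob_x (d0 ^ q)]
    ring
  -- the linear factors are nonzero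
  have hfac : ∀ u : Ω, (u - a) * (u - a ^ 2) = u ^ 2 + u + 1 := by
    intro u; linear_combination (-u) * ha2 + ha3
  have nz : ∀ u : Ω, u ^ 2 + u + 1 ≠ 0 → (u - a) ≠ 0 ∧ (u - a ^ 2) ≠ 0 := fun u hu =>
    ⟨fun h => hu (by rw [← hfac u, h, zero_mul]),
     fun h => hu (by rw [← hfac u, h, mul_zero])⟩
  obtain ⟨hu0, hv0⟩ := nz d0 (by rw [← hxbdef]; exact hxb0)
  obtain ⟨hu1, hv1⟩ := nz (d0 ^ q) (by rw [← hxq]; exact pow_ne_zero _ hxb0)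
  obtain ⟨hu2, hv2⟩ := nz (d0 ^ (q ^ 2)) (by rw [← hxq2]; exact pow_ne_zero _ hxb0)
  set A : Ω := (d0 - a) * ((d0 ^ q - a) * (d0 ^ (q ^ 2) - a)) with hA
  set B : Ω := (d0 - a ^ 2) * ((d0 ^ q - a ^ 2) * (d0 ^ (q ^ 2) - a ^ 2)) with hB
  have hA0 : A ≠ 0 := mul_ne_zero hu0 (mul_ne_zero hu1 hu2)
  have hB0 : B ≠ 0 := mul_ne_zero hv0 (mul_ne_zero hv1 hv2)
  have hABx : A * B = xb ^ (q ^ 2 + q + 1) := by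
    rw [pow_add, pow_add, pow_one, hxq, hxq2, hA, hB, hxbdef, ← hfac d0, ← hfac (d0 ^ q),
      ← hfac (d0 ^ (q ^ 2))]
    ring
  have key3 : (d0 - a ^ 2) ^ 3 * A = (d0 - a) ^ 3 * B := by
    rw [hA, hB]
    exact stmt19_key a d0 (d0 ^ q) (d0 ^ (q ^ 2)) h3ne ha3 ha2 n1 n2
  clear_value d0 xb A B
  -- exponent bookkeeping
  set M : ℕ := (q ^ 2 + q + 1) * r0 with hM
  clear_value M
  have h2M : 2 * M + 1 = q ^ 3 := by rw [hM, hr0]; ring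
  have hXM : xb ^ M = (A * B) ^ r0 := by rw [hM, pow_mul, hABx]
  have hDx3 : (D ^ 2 + D + 1) ^ (q ^ 3) = D ^ 2 + D + 1 := by
    rw [← hL]; exact FiniteField.pow_card _
  have hxq3 : xb ^ (q ^ 3) = xb := by
    rw [← hxbmap, ← map_pow, hDx3]
  have hx2 : xb ^ M * xb ^ M = 1 := by
    have h : xb ^ M * xb ^ M * xb = 1 * xb := by
      rw [one_mul, ← pow_add, ← pow_succ, show M + M + 1 = q ^ 3 by omega, hxq3]
    exact mul_right_cancel₀ hxb0 h
  -- the main identity, case by case on e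
  obtain ⟨m, hm, hmain⟩ :
      ∃ m : ℕ, ((2 * m : ℕ) : ℤ) = 3 * ((q : ℤ) - e) ∧
        ((d0 - a ^ 2) / (d0 - a)) ^ m * xb ^ M = 1 := by
    have hBB : (d0 - a ^ 2) ^ 3 * (A * B) = (d0 - a) ^ 3 * (B * B) := by
      rw [← mul_assoc, key3]; ring
    rcases hemod with ⟨he1, hq3⟩ | ⟨he1, hq3⟩
    · -- e = 1
      have haq : a ^ q = a := by
        have hq31 : q = 3 * (q / 3) + 1 := by omega
        calc a ^ q = a ^ (3 * (q / 3) + 1) := by rw [← hq31]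
          _ = (a ^ 3) ^ (q / 3) * a := by rw [pow_add, pow_mul, pow_one]
          _ = a := by rw [ha3, one_pow, one_mul]
      have ha2q : (a ^ 2) ^ q = a ^ 2 := by rw [pow_right_comm, haq]
      have hBq : B ^ q = B := by
        rw [hB, mul_pow, mul_pow, frob_sub, frob_sub, frob_sub, ha2q, hd1q, hd2q]
        ring
      have hBB1 : (B * B) ^ r0 = 1 := by
        apply mul_right_cancel₀ hB0
        rw [one_mul, show B * B = B ^ 2 by ring, ← pow_mul, ← pow_succ,
          show 2 * r0 + 1 = q by omega, hBq]
      refine ⟨3 * r0, ?_, ?_⟩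
      · rw [he1]; push_cast; omega
      · have h1' : (d0 - a ^ 2) ^ (3 * r0) * (A * B) ^ r0 = (d0 - a) ^ (3 * r0) := by
          calc (d0 - a ^ 2) ^ (3 * r0) * (A * B) ^ r0
              = ((d0 - a ^ 2) ^ 3 * (A * B)) ^ r0 := by
                conv_rhs => rw [mul_pow, ← pow_mul]
            _ = ((d0 - a) ^ 3 * (B * B)) ^ r0 := by rw [hBB]
            _ = (d0 - a) ^ (3 * r0) * (B * B) ^ r0 := by
                conv_lhs => rw [mul_pow, ← pow_mul]
            _ = (d0 - a) ^ (3 * r0) := by rw [hBB1, mul_one]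
        rw [div_pow, hXM, div_mul_eq_mul_div, h1', div_self (pow_ne_zero _ hu0)]
    · -- e = -1
      have haq : a ^ q = a ^ 2 := by
        have hq32 : q = 3 * (q / 3) + 2 := by omega
        calc a ^ q = a ^ (3 * (q / 3) + 2) := by rw [← hq32]
          _ = (a ^ 3) ^ (q / 3) * a ^ 2 := by rw [pow_add, pow_mul]
          _ = a ^ 2 := by rw [ha3, one_pow, one_mul]
      have ha4 : (a ^ 2) ^ 2 = a := by linear_combination a * ha3
      have ha2q : (a ^ 2) ^ q = a := by rw [pow_right_comm, haq, ha4]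
      have hBq : B ^ q = A := by
        rw [hB, hA, mul_pow, mul_pow, frob_sub, frob_sub, frob_sub, ha2q, hd1q, hd2q]
        ring
      have hBq1 : (B * B) ^ (r0 + 1) = A * B := by
        rw [show B * B = B ^ 2 by ring, ← pow_mul, show 2 * (r0 + 1) = q + 1 by omega,
          pow_succ, hBq]
      refine ⟨3 * (r0 + 1), ?_, ?_⟩
      · rw [he1]; push_cast; omega
      · have h1' : (d0 - a ^ 2) ^ (3 * (r0 + 1)) * (A * B) ^ (r0 + 1)
            = (d0 - a) ^ (3 * (r0 + 1)) * (A * B) := by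
          calc (d0 - a ^ 2) ^ (3 * (r0 + 1)) * (A * B) ^ (r0 + 1)
              = ((d0 - a ^ 2) ^ 3 * (A * B)) ^ (r0 + 1) := by
                conv_rhs => rw [mul_pow, ← pow_mul]
            _ = ((d0 - a) ^ 3 * (B * B)) ^ (r0 + 1) := by rw [hBB]
            _ = (d0 - a) ^ (3 * (r0 + 1)) * (B * B) ^ (r0 + 1) := by
                conv_lhs => rw [mul_pow, ← pow_mul]
            _ = (d0 - a) ^ (3 * (r0 + 1)) * (A * B) := by rw [hBq1]
        have h2' : (d0 - a ^ 2) ^ (3 * (r0 + 1)) * (A * B) ^ r0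
            = (d0 - a) ^ (3 * (r0 + 1)) := by
          apply mul_right_cancel₀ (mul_ne_zero hA0 hB0)
          rw [mul_assoc, ← pow_succ, h1']
        rw [div_pow, hXM, div_mul_eq_mul_div, h2', div_self (pow_ne_zero _ hu0)]
  -- Euler's criterion and transfer to L
  have hcardM : Fintype.card L / 2 = M := by rw [hL]; omega
  have euler : IsSquare (D ^ 2 + D + 1) ↔ (D ^ 2 + D + 1) ^ M = 1 := by
    rw [FiniteField.isSquare_iff hchar2 hx, hcardM]
  have hmapM : (D ^ 2 + D + 1 : L) ^ M = 1 ↔ xb ^ M = 1 := by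
    constructor
    · intro h
      rw [← hxbmap, ← map_pow, h, map_one]
    · intro h
      apply hinjL
      rw [map_pow, hxbmap, h, map_one]
  rw [hainv]
  constructor
  · rintro ⟨g, hg1, hg2⟩
    have hgn : g ^ (2 * m) = 1 := by
      rw [← hm, zpow_natCast] at hg1
      exact hg1
    have hCm : ((d0 - a ^ 2) / (d0 - a)) ^ m = 1 := by
      rw [← hg2, ← pow_mul]
      exact hgn
    apply euler.mpr
    apply hmapM.mpr
    have := hmain
    rwa [hCm, one_mul] at this
  · intro hsq
    have hxM : xb ^ M = 1 := hmapM.mp (euler.mp hsq)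
    have hCm : ((d0 - a ^ 2) / (d0 - a)) ^ m = 1 := by
      have := hmain
      rwa [hxM, mul_one] at this
    obtain ⟨g, hg⟩ := IsAlgClosed.exists_pow_nat_eq ((d0 - a ^ 2) / (d0 - a)) (n := 2)
      (by norm_num)
    refine ⟨g, ?_, hg⟩
    rw [← hm, zpow_natCast, pow_mul, hg, hCm]
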